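/- If the Borel probability measures π^N on 𝒜 converge weakly-* to π^∞ (i.e., ∫ f dπ^N → ∫ f dπ^∞ for every bounded continuous f : 𝒜 → ℝ), then for every fixed measurable control u with finite cost, the averaged costs converge: J_{s,π^N}[u] → J_{s,π^∞}[u] as N → ∞. -/

import Mathlib

open MeasureTheory Set Matrix Filter Topology

noncomputable instance matMS {k l : ℕ} : MeasurableSpace (Matrix (Fin k) (Fin l) ℝ) := borel _
instance matBS {k l : ℕ} : BorelSpace (Matrix (Fin k) (Fin l) ℝ) := ⟨rfl⟩

/-- The matrix 2-norm (operator norm w.r.t. Euclidean norms). -/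
noncomputable def opN {k l : ℕ} (M : Matrix (Fin k) (Fin l) ℝ) : ℝ :=
  ‖LinearMap.toContinuousLinearMap (Matrix.toEuclideanLin M)‖

/-- Application of a matrix to a Euclidean vector. -/
noncomputable def app {k l : ℕ} (M : Matrix (Fin k) (Fin l) ℝ)
    (v : EuclideanSpace ℝ (Fin l)) : EuclideanSpace ℝ (Fin k) :=
  Matrix.toEuclideanLin M v

/-- `x` is the solution on `[s,T]` of `ẋ = A x + B u`, `x(s) = x₀` (in integral form). -/
noncomputable def IsTraj {n m : ℕ} (B : Matrix (Fin n) (Fin m) ℝ) (s T : ℝ)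
    (x₀ : EuclideanSpace ℝ (Fin n)) (A : Matrix (Fin n) (Fin n) ℝ)
    (u : ℝ → EuclideanSpace ℝ (Fin m)) (x : ℝ → EuclideanSpace ℝ (Fin n)) : Prop :=
  ContinuousOn x (Set.Icc s T) ∧
  ∀ t ∈ Set.Icc s T, x t = x₀ + ∫ τ in s..t, (app A (x τ) + app B (u τ))

/-- The LQ cost `½∫ₛᵀ (xᵀQx + uᵀRu) dt + ½ x(T)ᵀ Q_f x(T)` of a trajectory/control pair. -/
noncomputable def cost {n m : ℕ} (Q Qf : Matrix (Fin n) (Fin n) ℝ) (R : Matrix (Fin m) (Fin m) ℝ)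
    (s T : ℝ) (x : ℝ → EuclideanSpace ℝ (Fin n)) (u : ℝ → EuclideanSpace ℝ (Fin m)) : ℝ :=
  (1/2) * (∫ t in s..T, ((inner ℝ (x t) (app Q (x t)) : ℝ) + (inner ℝ (u t) (app R (u t)) : ℝ)))
    + (1/2) * (inner ℝ (x T) (app Qf (x T)) : ℝ)

/-- An admissible process for the averaged problem: an integrable (and square-integrable)
control together with the corresponding family of trajectories, one for each `A ∈ 𝒜`. -/
noncomputable def Adm {n m : ℕ} (B : Matrix (Fin n) (Fin m) ℝ)
    (𝒜 : Set (Matrix (Fin n) (Fin n) ℝ)) (s T : ℝ) (x₀ : EuclideanSpace ℝ (Fin n))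
    (u : ℝ → EuclideanSpace ℝ (Fin m))
    (x : Matrix (Fin n) (Fin n) ℝ → ℝ → EuclideanSpace ℝ (Fin n)) : Prop :=
  MeasureTheory.IntegrableOn u (Set.Icc s T) ∧
  MeasureTheory.IntegrableOn (fun t => ‖u t‖ ^ 2) (Set.Icc s T) ∧
  ∀ A ∈ 𝒜, IsTraj B s T x₀ A u (x A)

/-- The averaged cost `J_{s,π}[u] = ∫_𝒜 cost(x_A, u) dπ(A)`. -/
noncomputable def Jcost {n m : ℕ} (Q Qf : Matrix (Fin n) (Fin n) ℝ)
    (R : Matrix (Fin m) (Fin m) ℝ) (s T : ℝ) (π : Measure (Matrix (Fin n) (Fin n) ℝ))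
    (u : ℝ → EuclideanSpace ℝ (Fin m))
    (x : Matrix (Fin n) (Fin n) ℝ → ℝ → EuclideanSpace ℝ (Fin n)) : ℝ :=
  ∫ A, cost Q Qf R s T (x A) u ∂π

/-- The value function `V_π(s,x₀)` of the averaged problem. -/
noncomputable def Val {n m : ℕ} (Q Qf : Matrix (Fin n) (Fin n) ℝ)
    (R : Matrix (Fin m) (Fin m) ℝ) (B : Matrix (Fin n) (Fin m) ℝ)
    (𝒜 : Set (Matrix (Fin n) (Fin n) ℝ)) (T : ℝ) (π : Measure (Matrix (Fin n) (Fin n) ℝ))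
    (s : ℝ) (x₀ : EuclideanSpace ℝ (Fin n)) : ℝ :=
  sInf {c | ∃ u x, Adm B 𝒜 s T x₀ u x ∧ c = Jcost Q Qf R s T π u x}

/-- Wasserstein-1 distance between measures on the matrix space, induced by the 2-norm. -/
noncomputable def W1 {k : ℕ} (π π' : Measure (Matrix (Fin k) (Fin k) ℝ)) : ℝ :=
  sInf {r | ∃ γ : Measure (Matrix (Fin k) (Fin k) ℝ × Matrix (Fin k) (Fin k) ℝ),
    γ.map Prod.fst = π ∧ γ.map Prod.snd = π' ∧ r = ∫ p, opN (p.1 - p.2) ∂γ}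

/-- Support of a measure. -/
def msupport {α : Type*} [TopologicalSpace α] [MeasurableSpace α]
    (π : Measure α) : Set α :=
  {A | ∀ U : Set α, IsOpen U → A ∈ U → 0 < π U}

/-! ### Auxiliary lemmas -/

/-- `app M` as a continuous linear map. -/
noncomputable def appL {k l : ℕ} (M : Matrix (Fin k) (Fin l) ℝ) :
    EuclideanSpace ℝ (Fin l) →L[ℝ] EuclideanSpace ℝ (Fin k) :=
  LinearMap.toContinuousLinearMap (Matrix.toEuclideanLin M)

lemma app_eq_appL {k l : ℕ} (M : Matrix (Fin k) (Fin l) ℝ) : app M = ⇑(appL M) := rfl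

lemma norm_app_le {k l : ℕ} (M : Matrix (Fin k) (Fin l) ℝ) (v : EuclideanSpace ℝ (Fin l)) :
    ‖app M v‖ ≤ opN M * ‖v‖ := (appL M).le_opNorm v

lemma app_sub {k l : ℕ} (M M' : Matrix (Fin k) (Fin l) ℝ) (v : EuclideanSpace ℝ (Fin l)) :
    app (M - M') v = app M v - app M' v := by
  simp [app, map_sub, LinearMap.sub_apply]

lemma app_map_sub {k l : ℕ} (M : Matrix (Fin k) (Fin l) ℝ) (v w : EuclideanSpace ℝ (Fin l)) :
    app M (v - w) = app M v - app M w := by simp [app, map_sub]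

lemma opN_zero {k l : ℕ} : opN (0 : Matrix (Fin k) (Fin l) ℝ) = 0 := by
  simp [opN, map_zero]

lemma opN_nonneg {k l : ℕ} (M : Matrix (Fin k) (Fin l) ℝ) : 0 ≤ opN M := norm_nonneg _

lemma opN_continuous {k l : ℕ} : Continuous (opN (k := k) (l := l)) := by
  have h : Continuous fun M : Matrix (Fin k) (Fin l) ℝ =>
      LinearMap.toContinuousLinearMap (Matrix.toEuclideanLin M) := by
    have : (fun M : Matrix (Fin k) (Fin l) ℝ =>
        LinearMap.toContinuousLinearMap (Matrix.toEuclideanLin M)) =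
        ⇑((Matrix.toEuclideanLin.trans LinearMap.toContinuousLinearMap).toLinearMap) := rfl
    rw [this]
    exact LinearMap.continuous_of_finiteDimensional _
  exact continuous_norm.comp h

lemma quad_diff {k : ℕ} (Q : Matrix (Fin k) (Fin k) ℝ) (v w : EuclideanSpace ℝ (Fin k))
    (Mx : ℝ) (hv : ‖v‖ ≤ Mx) (hw : ‖w‖ ≤ Mx) :
    |(inner ℝ v (app Q v) : ℝ) - (inner ℝ w (app Q w) : ℝ)| ≤ 2 * Mx * opN Q * ‖v - w‖ := by
  have hMx : 0 ≤ Mx := le_trans (norm_nonneg _) hv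
  have hsplit : (inner ℝ v (app Q v) : ℝ) - (inner ℝ w (app Q w) : ℝ)
      = (inner ℝ (v - w) (app Q v) : ℝ) + (inner ℝ w (app Q (v - w)) : ℝ) := by
    rw [app_map_sub, inner_sub_left, inner_sub_right]; ring
  rw [hsplit]
  have h1 : |(inner ℝ (v - w) (app Q v) : ℝ)| ≤ ‖v - w‖ * (opN Q * Mx) := by
    refine le_trans (abs_real_inner_le_norm _ _) ?_
    refine mul_le_mul_of_nonneg_left ?_ (norm_nonneg _)
    exact le_trans (norm_app_le Q v) (mul_le_mul_of_nonneg_left hv (opN_nonneg Q))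
  have h2 : |(inner ℝ w (app Q (v - w)) : ℝ)| ≤ Mx * (opN Q * ‖v - w‖) := by
    refine le_trans (abs_real_inner_le_norm _ _) ?_
    exact mul_le_mul hw (norm_app_le Q (v - w)) (norm_nonneg _) hMx
  calc |(inner ℝ (v - w) (app Q v) : ℝ) + (inner ℝ w (app Q (v - w)) : ℝ)|
      ≤ |(inner ℝ (v - w) (app Q v) : ℝ)| + |(inner ℝ w (app Q (v - w)) : ℝ)| := abs_add_le _ _
    _ ≤ ‖v - w‖ * (opN Q * Mx) + Mx * (opN Q * ‖v - w‖) := add_le_add h1 h2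
    _ = 2 * Mx * opN Q * ‖v - w‖ := by ring

/-- Integral form of Grönwall's inequality. -/
lemma gron (s T a C : ℝ) (ha : 0 ≤ a) (hC : 0 ≤ C) (φ : ℝ → ℝ)
    (hφ : Continuous φ) (hpos : ∀ t ∈ Icc s T, 0 ≤ φ t)
    (h : ∀ t ∈ Icc s T, φ t ≤ a + C * ∫ τ in s..t, φ τ) :
    ∀ t ∈ Icc s T, φ t ≤ a * Real.exp (C * (t - s)) := by
  set ψ : ℝ → ℝ := fun t => ∫ τ in s..t, φ τ with hψ
  have hψd : ∀ t : ℝ, HasDerivAt ψ (φ t) t := fun t =>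
    intervalIntegral.integral_hasDerivAt_right (hφ.intervalIntegrable s t)
      (hφ.stronglyMeasurable.stronglyMeasurableAtFilter) hφ.continuousAt
  have hψc : Continuous ψ := by
    apply continuous_iff_continuousAt.2 (fun t => (hψd t).continuousAt)
  have hψ0 : ∀ t ∈ Icc s T, 0 ≤ ψ t := by
    intro t ht
    exact intervalIntegral.integral_nonneg ht.1
      (fun τ hτ => hpos τ ⟨hτ.1, le_trans hτ.2 ht.2⟩)
  have key := norm_le_gronwallBound_of_norm_deriv_right_le (f := ψ) (f' := φ)
    (δ := 0) (K := C) (ε := a) (a := s) (b := T) hψc.continuousOn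
    (fun t _ => (hψd t).hasDerivWithinAt)
    (by simp [hψ, intervalIntegral.integral_same])
    (fun t ht => by
      have h1 := h t ⟨ht.1, le_of_lt ht.2⟩
      have h2 := hpos t ⟨ht.1, le_of_lt ht.2⟩
      have h3 := hψ0 t ⟨ht.1, le_of_lt ht.2⟩
      rw [Real.norm_eq_abs, Real.norm_eq_abs, abs_of_nonneg h2, abs_of_nonneg h3]
      linarith)
  intro t ht
  have h4 := key t ht
  rw [Real.norm_eq_abs, abs_of_nonneg (hψ0 t ht)] at h4
  have h5 : a + C * ψ t ≤ a * Real.exp (C * (t - s)) := by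
    rcases eq_or_ne C 0 with hC0 | hC0
    · simp only [hC0, zero_mul, Real.exp_zero, mul_one]; linarith
    · have h6 : gronwallBound 0 C a (t - s) = a / C * (Real.exp (C * (t - s)) - 1) := by
        rw [gronwallBound_of_K_ne_0 hC0]; ring
      rw [h6] at h4
      have hCpos : 0 < C := lt_of_le_of_ne hC (Ne.symm hC0)
      have := mul_le_mul_of_nonneg_left h4 hC
      calc a + C * ψ t ≤ a + C * (a / C * (Real.exp (C * (t - s)) - 1)) := by nlinarith
        _ = a * Real.exp (C * (t - s)) := by field_simp; ring
  exact le_trans (h t ht) h5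

/-- Grönwall bound for solutions of the linear integral equation
`z t = z₀ + ∫ₛᵗ (A z + w)`. -/
lemma traj_gron {n : ℕ} (s T : ℝ) (hsT : s ≤ T) (C : ℝ) (hC : 0 ≤ C)
    (A : Matrix (Fin n) (Fin n) ℝ) (hA : opN A ≤ C)
    (z₀ : EuclideanSpace ℝ (Fin n)) (z w : ℝ → EuclideanSpace ℝ (Fin n))
    (hz : ContinuousOn z (Icc s T)) (hw : IntegrableOn w (Icc s T))
    (heq : ∀ t ∈ Icc s T, z t = z₀ + ∫ τ in s..t, (app A (z τ) + w τ)) :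
    ∀ t ∈ Icc s T, ‖z t‖ ≤ (‖z₀‖ + ∫ τ in s..T, ‖w τ‖) * Real.exp (C * (t - s)) := by
  set a : ℝ := ‖z₀‖ + ∫ τ in s..T, ‖w τ‖ with haa
  have hwn : ∀ b c, b ∈ Icc s T → c ∈ Icc s T → b ≤ c →
      IntervalIntegrable w volume b c := by
    intro b c hb hc hbc
    apply IntegrableOn.intervalIntegrable
    rw [uIcc_of_le hbc]
    exact hw.mono_set (Icc_subset_Icc hb.1 hc.2)
  have hwT : IntervalIntegrable w volume s T :=
    hwn s T (left_mem_Icc.2 hsT) (right_mem_Icc.2 hsT) hsT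
  have hwnorm_nonneg : 0 ≤ ∫ τ in s..T, ‖w τ‖ :=
    intervalIntegral.integral_nonneg hsT (fun τ _ => norm_nonneg _)
  have ha : 0 ≤ a := by positivity
  have hAz : ContinuousOn (fun τ => app A (z τ)) (Icc s T) := by
    rw [app_eq_appL]; exact (appL A).continuous.comp_continuousOn hz
  have hb : ∀ t ∈ Icc s T, ‖z t‖ ≤ a + C * ∫ τ in s..t, ‖z τ‖ := by
    intro t ht
    have hsub : Icc s t ⊆ Icc s T := Icc_subset_Icc le_rfl ht.2
    have hiA : IntervalIntegrable (fun τ => app A (z τ)) volume s t := by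
      apply ContinuousOn.intervalIntegrable
      rw [uIcc_of_le ht.1]; exact hAz.mono hsub
    have hiw : IntervalIntegrable w volume s t :=
      hwn s t (left_mem_Icc.2 hsT) ht ht.1
    have hzsplit : z t = z₀ + ((∫ τ in s..t, app A (z τ)) + ∫ τ in s..t, w τ) := by
      rw [heq t ht, intervalIntegral.integral_add hiA hiw]
    have h1 : ‖∫ τ in s..t, app A (z τ)‖ ≤ C * ∫ τ in s..t, ‖z τ‖ := by
      calc ‖∫ τ in s..t, app A (z τ)‖ ≤ ∫ τ in s..t, ‖app A (z τ)‖ :=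
            intervalIntegral.norm_integral_le_integral_norm ht.1
        _ ≤ ∫ τ in s..t, C * ‖z τ‖ := by
            have hiz : IntervalIntegrable (fun τ => C * ‖z τ‖) volume s t := by
              apply ContinuousOn.intervalIntegrable
              rw [uIcc_of_le ht.1]
              exact continuousOn_const.mul ((hz.mono hsub).norm)
            apply intervalIntegral.integral_mono_on ht.1 hiA.norm hiz
            intro τ hτ
            exact le_trans (norm_app_le A (z τ))
              (mul_le_mul_of_nonneg_right hA (norm_nonneg _))
        _ = C * ∫ τ in s..t, ‖z τ‖ := by
            rw [intervalIntegral.integral_const_mul]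
    have h2 : ‖∫ τ in s..t, w τ‖ ≤ ∫ τ in s..T, ‖w τ‖ := by
      calc ‖∫ τ in s..t, w τ‖ ≤ ∫ τ in s..t, ‖w τ‖ :=
            intervalIntegral.norm_integral_le_integral_norm ht.1
        _ ≤ ∫ τ in s..T, ‖w τ‖ :=
            intervalIntegral.integral_mono_interval le_rfl ht.1 ht.2
              (Filter.Eventually.of_forall (fun τ => norm_nonneg _)) hwT.norm
    calc ‖z t‖ ≤ ‖z₀‖ + (‖∫ τ in s..t, app A (z τ)‖ + ‖∫ τ in s..t, w τ‖) := by
          rw [hzsplit]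
          exact le_trans (norm_add_le _ _) (by gcongr; exact norm_add_le _ _)
      _ ≤ a + C * ∫ τ in s..t, ‖z τ‖ := by rw [haa]; linarith
  set proj : ℝ → ℝ := fun t => max s (min t T) with hproj
  have hprojc : Continuous proj := by fun_prop
  have hprojmem : ∀ t, proj t ∈ Icc s T := fun t =>
    ⟨le_max_left _ _, max_le (hsT) (min_le_right _ _)⟩
  have hprojeq : ∀ t ∈ Icc s T, proj t = t := fun t ht => by
    rw [hproj]; simp only [min_eq_left ht.2, max_eq_right ht.1]
  set φ : ℝ → ℝ := fun t => ‖z (proj t)‖ with hφdef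
  have hφc : Continuous φ :=
    continuous_norm.comp (hz.comp_continuous hprojc hprojmem)
  have hφeq : ∀ t ∈ Icc s T, φ t = ‖z t‖ := fun t ht => by
    rw [hφdef]; simp only [hprojeq t ht]
  have hint : ∀ t ∈ Icc s T, (∫ τ in s..t, φ τ) = ∫ τ in s..t, ‖z τ‖ := by
    intro t ht
    apply intervalIntegral.integral_congr
    intro τ hτ
    rw [uIcc_of_le ht.1] at hτ
    exact hφeq τ ⟨hτ.1, le_trans hτ.2 ht.2⟩
  have hg := gron s T a C ha hC φ hφc (fun t _ => norm_nonneg _)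
    (fun t ht => by rw [hφeq t ht, hint t ht]; exact hb t ht)
  intro t ht
  have h := hg t ht
  rwa [hφeq t ht] at h

theorem stmt_12 {n m : ℕ} (T : ℝ) (hT : 0 < T) (s : ℝ) (hs : s ∈ Set.Icc 0 T)
    (x₀ : EuclideanSpace ℝ (Fin n)) (B : Matrix (Fin n) (Fin m) ℝ)
    (𝒜 : Set (Matrix (Fin n) (Fin n) ℝ)) (h𝒜 : IsCompact 𝒜)
    (C𝒜 : ℝ) (hC𝒜 : ∀ A ∈ 𝒜, opN A ≤ C𝒜)
    (Q Qf : Matrix (Fin n) (Fin n) ℝ) (R : Matrix (Fin m) (Fin m) ℝ)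
    (hQ : Q.PosSemidef) (hQf : Qf.PosSemidef) (hR : R.PosDef)
    (πN : ℕ → Measure (Matrix (Fin n) (Fin n) ℝ))
    (πlim : Measure (Matrix (Fin n) (Fin n) ℝ))
    (hπN : ∀ N, IsProbabilityMeasure (πN N)) (hπlim : IsProbabilityMeasure πlim)
    (hπNs : ∀ N, (πN N) 𝒜ᶜ = 0) (hπlims : πlim 𝒜ᶜ = 0)
    -- weak-* convergence `πᴺ → π∞`
    (hw : ∀ f : Matrix (Fin n) (Fin n) ℝ → ℝ, Continuous f → (∃ C, ∀ A, |f A| ≤ C) →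
      Tendsto (fun N => ∫ A, f A ∂(πN N)) atTop (𝓝 (∫ A, f A ∂πlim)))
    -- a fixed measurable control with finite cost, and its trajectories
    (u : ℝ → EuclideanSpace ℝ (Fin m)) (hu : IntegrableOn u (Set.Icc s T))
    (hu2 : IntegrableOn (fun t => ‖u t‖ ^ 2) (Set.Icc s T))
    (x : Matrix (Fin n) (Fin n) ℝ → ℝ → EuclideanSpace ℝ (Fin n))
    (hx : ∀ A ∈ 𝒜, IsTraj B s T x₀ A u (x A)) :
    Tendsto (fun N => Jcost Q Qf R s T (πN N) u x) atTop
      (𝓝 (Jcost Q Qf R s T πlim u x)) := by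
  have hsT : s ≤ T := hs.2
  set F : Matrix (Fin n) (Fin n) ℝ → ℝ := fun A => cost Q Qf R s T (x A) u with hF
  -- constants
  set C : ℝ := max C𝒜 0 with hCdef
  have hC : 0 ≤ C := le_max_right _ _
  have hAC : ∀ A ∈ 𝒜, opN A ≤ C := fun A hA => le_trans (hC𝒜 A hA) (le_max_left _ _)
  have hBu : IntegrableOn (fun τ => app B (u τ)) (Set.Icc s T) := by
    rw [app_eq_appL]
    exact (appL B).integrable_comp hu
  set KB : ℝ := ∫ τ in s..T, ‖app B (u τ)‖ with hKBdef
  have hKB0 : 0 ≤ KB :=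
    intervalIntegral.integral_nonneg hsT (fun τ _ => norm_nonneg _)
  set Mx : ℝ := (‖x₀‖ + KB) * Real.exp (C * (T - s)) with hMxdef
  have hMx0 : 0 ≤ Mx := by positivity
  have hMx : ∀ A ∈ 𝒜, ∀ t ∈ Icc s T, ‖x A t‖ ≤ Mx := by
    intro A hA t ht
    have h := traj_gron s T hsT C hC A (hAC A hA) x₀ (x A) (fun τ => app B (u τ))
      (hx A hA).1 hBu (hx A hA).2 t ht
    refine le_trans h ?_
    rw [hMxdef]
    apply mul_le_mul_of_nonneg_left _ (by positivity)
    exact Real.exp_le_exp.2 (mul_le_mul_of_nonneg_left (by linarith [ht.2]) hC)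
  set L : ℝ := Mx * (T - s) * Real.exp (C * (T - s)) with hLdef
  have hL0 : 0 ≤ L := by
    apply mul_nonneg (mul_nonneg hMx0 (by linarith)) (Real.exp_pos _).le
  -- Lipschitz dependence of the trajectory on A
  have hxlip : ∀ A ∈ 𝒜, ∀ A' ∈ 𝒜, ∀ t ∈ Icc s T,
      ‖x A t - x A' t‖ ≤ opN (A - A') * L := by
    intro A hA A' hA' t ht
    have hcx := (hx A hA).1
    have hcx' := (hx A' hA').1
    set w : ℝ → EuclideanSpace ℝ (Fin n) := fun τ => app (A - A') (x A' τ) with hwdef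
    have hwc : ContinuousOn w (Icc s T) := by
      rw [hwdef]; simp only [app_eq_appL]
      exact (appL (A - A')).continuous.comp_continuousOn hcx'
    have hwint : IntegrableOn w (Icc s T) := hwc.integrableOn_Icc
    have hii : ∀ (A₁ : Matrix (Fin n) (Fin n) ℝ), ContinuousOn (x A₁) (Icc s T) →
        ∀ r ∈ Icc s T,
        IntervalIntegrable (fun τ => app A₁ (x A₁ τ) + app B (u τ)) volume s r := by
      intro A₁ hc r hr
      apply IntegrableOn.intervalIntegrable
      rw [uIcc_of_le hr.1]
      apply Integrable.add
      · apply ContinuousOn.integrableOn_Icc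
        simp only [app_eq_appL]
        exact (appL A₁).continuous.comp_continuousOn (hc.mono (Icc_subset_Icc le_rfl hr.2))
      · exact hBu.mono_set (Icc_subset_Icc le_rfl hr.2)
    have heq : ∀ r ∈ Icc s T, (fun r => x A r - x A' r) r
        = 0 + ∫ τ in s..r, (app A ((x A τ) - (x A' τ)) + w τ) := by
      intro r hr
      have h1 := (hx A hA).2 r hr
      have h2 := (hx A' hA').2 r hr
      have h3 : x A r - x A' r = ∫ τ in s..r,
          ((app A (x A τ) + app B (u τ)) - (app A' (x A' τ) + app B (u τ))) := by
        rw [intervalIntegral.integral_sub (hii A hcx r hr) (hii A' hcx' r hr),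
          h1, h2]
        abel
      show x A r - x A' r = _
      rw [h3, zero_add]
      apply intervalIntegral.integral_congr
      intro τ _
      rw [hwdef]
      simp only [app_map_sub, app_sub]
      abel
    have hgr := traj_gron s T hsT C hC A (hAC A hA) 0 (fun r => x A r - x A' r) w
      (hcx.sub hcx') hwint heq t ht
    have hwb : (∫ τ in s..T, ‖w τ‖) ≤ opN (A - A') * Mx * (T - s) := by
      have hiw : IntervalIntegrable (fun τ => ‖w τ‖) volume s T := by
        apply ContinuousOn.intervalIntegrable
        rw [uIcc_of_le hsT]; exact hwc.norm
      calc (∫ τ in s..T, ‖w τ‖) ≤ ∫ _ in s..T, opN (A - A') * Mx := by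
            apply intervalIntegral.integral_mono_on hsT hiw intervalIntegrable_const
            intro τ hτ
            exact le_trans (norm_app_le (A - A') (x A' τ))
              (mul_le_mul_of_nonneg_left (hMx A' hA' τ hτ) (opN_nonneg _))
        _ = opN (A - A') * Mx * (T - s) := by
            rw [intervalIntegral.integral_const, smul_eq_mul]; ring
    have hwnn : 0 ≤ ∫ τ in s..T, ‖w τ‖ :=
      intervalIntegral.integral_nonneg hsT (fun τ _ => norm_nonneg _)
    have hexp : Real.exp (C * (t - s)) ≤ Real.exp (C * (T - s)) :=
      Real.exp_le_exp.2 (mul_le_mul_of_nonneg_left (by linarith [ht.2]) hC)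
    calc ‖x A t - x A' t‖ ≤ (‖(0 : EuclideanSpace ℝ (Fin n))‖ + ∫ τ in s..T, ‖w τ‖)
          * Real.exp (C * (t - s)) := hgr
      _ = (∫ τ in s..T, ‖w τ‖) * Real.exp (C * (t - s)) := by rw [norm_zero, zero_add]
      _ ≤ (opN (A - A') * Mx * (T - s)) * Real.exp (C * (T - s)) := by
          apply mul_le_mul hwb hexp (Real.exp_pos _).le
          exact mul_nonneg (mul_nonneg (opN_nonneg _) hMx0) (by linarith)
      _ = opN (A - A') * L := by rw [hLdef]; ring
  -- integrability of the control quadratic term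
  have hrint : IntervalIntegrable (fun t => (inner ℝ (u t) (app R (u t)) : ℝ)) volume s T := by
    apply IntegrableOn.intervalIntegrable
    rw [uIcc_of_le hsT]
    have hmeas : AEStronglyMeasurable (fun t => (inner ℝ (u t) (app R (u t)) : ℝ))
        (volume.restrict (Icc s T)) := by
      have hcont : Continuous (fun v : EuclideanSpace ℝ (Fin m) => (inner ℝ v (appL R v) : ℝ)) :=
        continuous_id.inner (appL R).continuous
      simpa only [app_eq_appL] using hcont.comp_aestronglyMeasurable hu.aestronglyMeasurable
    apply Integrable.mono' (hu2.const_mul (opN R)) hmeas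
    filter_upwards with t
    rw [Real.norm_eq_abs]
    calc |(inner ℝ (u t) (app R (u t)) : ℝ)| ≤ ‖u t‖ * ‖app R (u t)‖ :=
          abs_real_inner_le_norm _ _
      _ ≤ ‖u t‖ * (opN R * ‖u t‖) :=
          mul_le_mul_of_nonneg_left (norm_app_le R (u t)) (norm_nonneg _)
      _ = opN R * ‖u t‖ ^ 2 := by ring
  have hqint : ∀ A ∈ 𝒜,
      IntervalIntegrable (fun t => (inner ℝ (x A t) (app Q (x A t)) : ℝ)) volume s T := by
    intro A hA
    apply ContinuousOn.intervalIntegrable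
    rw [uIcc_of_le hsT]
    exact ((hx A hA).1).inner ((appL Q).continuous.comp_continuousOn (hx A hA).1)
  have hsplit : ∀ A ∈ 𝒜, F A =
      (1/2) * (∫ t in s..T, (inner ℝ (x A t) (app Q (x A t)) : ℝ))
      + (1/2) * (∫ t in s..T, (inner ℝ (u t) (app R (u t)) : ℝ))
      + (1/2) * (inner ℝ (x A T) (app Qf (x A T)) : ℝ) := by
    intro A hA
    rw [hF]
    simp only [cost]
    rw [intervalIntegral.integral_add (hqint A hA) hrint]
    ring
  -- Lipschitz property of the cost in A
  set Kc : ℝ := Mx * opN Q * L * (T - s) + Mx * opN Qf * L with hKcdef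
  have hFlip : ∀ A ∈ 𝒜, ∀ A' ∈ 𝒜, |F A - F A'| ≤ Kc * opN (A - A') := by
    intro A hA A' hA'
    have hdiff : F A - F A' =
        (1/2) * ((∫ t in s..T, (inner ℝ (x A t) (app Q (x A t)) : ℝ))
          - (∫ t in s..T, (inner ℝ (x A' t) (app Q (x A' t)) : ℝ)))
        + (1/2) * ((inner ℝ (x A T) (app Qf (x A T)) : ℝ)
          - (inner ℝ (x A' T) (app Qf (x A' T)) : ℝ)) := by
      rw [hsplit A hA, hsplit A' hA']; ring
    have hqd : |(∫ t in s..T, (inner ℝ (x A t) (app Q (x A t)) : ℝ))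
        - (∫ t in s..T, (inner ℝ (x A' t) (app Q (x A' t)) : ℝ))|
        ≤ (2 * Mx * opN Q * (opN (A - A') * L)) * |T - s| := by
      rw [← intervalIntegral.integral_sub (hqint A hA) (hqint A' hA'),
        ← Real.norm_eq_abs]
      apply intervalIntegral.norm_integral_le_of_norm_le_const
      intro τ hτ
      rw [Set.uIoc_of_le hsT] at hτ
      have hτ' : τ ∈ Icc s T := ⟨le_of_lt hτ.1, hτ.2⟩
      rw [Real.norm_eq_abs]
      refine le_trans (quad_diff Q (x A τ) (x A' τ) Mx (hMx A hA τ hτ') (hMx A' hA' τ hτ')) ?_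
      exact mul_le_mul_of_nonneg_left (hxlip A hA A' hA' τ hτ')
        (mul_nonneg (by linarith : (0:ℝ) ≤ 2 * Mx) (opN_nonneg Q))
    have hgd : |(inner ℝ (x A T) (app Qf (x A T)) : ℝ)
        - (inner ℝ (x A' T) (app Qf (x A' T)) : ℝ)|
        ≤ 2 * Mx * opN Qf * (opN (A - A') * L) := by
      have hT' : T ∈ Icc s T := right_mem_Icc.2 hsT
      refine le_trans (quad_diff Qf (x A T) (x A' T) Mx (hMx A hA T hT') (hMx A' hA' T hT')) ?_
      exact mul_le_mul_of_nonneg_left (hxlip A hA A' hA' T hT')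
        (mul_nonneg (by linarith : (0:ℝ) ≤ 2 * Mx) (opN_nonneg Qf))
    have habs : |F A - F A'| ≤
        (1/2) * |(∫ t in s..T, (inner ℝ (x A t) (app Q (x A t)) : ℝ))
          - (∫ t in s..T, (inner ℝ (x A' t) (app Q (x A' t)) : ℝ))|
        + (1/2) * |(inner ℝ (x A T) (app Qf (x A T)) : ℝ)
          - (inner ℝ (x A' T) (app Qf (x A' T)) : ℝ)| := by
      rw [hdiff]
      refine le_trans (abs_add_le _ _) ?_
      rw [abs_mul, abs_mul]
      simp [abs_of_nonneg]
    have hTs : |T - s| = T - s := abs_of_nonneg (by linarith)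
    rw [hTs] at hqd
    rw [hKcdef]
    nlinarith [hqd, hgd, habs]
  -- continuity of the cost in A on 𝒜
  have hFcont : ContinuousOn F 𝒜 := by
    intro A₀ hA₀
    have hg : Tendsto (fun A => Kc * opN (A - A₀)) (𝓝[𝒜] A₀) (𝓝 0) := by
      have hc : Continuous fun A : Matrix (Fin n) (Fin n) ℝ => Kc * opN (A - A₀) :=
        continuous_const.mul (opN_continuous.comp (continuous_id.sub continuous_const))
      have := (hc.tendsto A₀).mono_left (nhdsWithin_le_nhds (s := 𝒜))
      simpa [sub_self, opN_zero] using this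
    have hsq : Tendsto (fun A => F A - F A₀) (𝓝[𝒜] A₀) (𝓝 0) := by
      apply squeeze_zero_norm' _ hg
      filter_upwards [self_mem_nhdsWithin] with A hA
      rw [Real.norm_eq_abs]
      exact hFlip A hA A₀ hA₀
    have : Tendsto F (𝓝[𝒜] A₀) (𝓝 (F A₀)) := by
      have h2 := hsq.add (tendsto_const_nhds (x := F A₀))
      simpa using h2
    exact this
  -- bounded continuous extension via Tietze
  haveI : CompactSpace ↥𝒜 := isCompact_iff_compactSpace.mp h𝒜
  haveI : NormalSpace (Matrix (Fin n) (Fin n) ℝ) :=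
    (inferInstance : NormalSpace ((Fin n) → (Fin n) → ℝ))
  obtain ⟨g, hgnorm, hgr⟩ :=
    BoundedContinuousFunction.exists_norm_eq_restrict_eq_of_closed
      (BoundedContinuousFunction.mkOfCompact ⟨𝒜.restrict F, hFcont.restrict⟩) h𝒜.isClosed
  have hgA : ∀ A ∈ 𝒜, g A = F A := by
    intro A hA
    have := DFunLike.congr_fun hgr (⟨A, hA⟩ : 𝒜)
    simp [BoundedContinuousFunction.restrict_apply] at this
    exact this
  -- identify the averaged costs with integrals of `g`
  have key : ∀ (π : Measure (Matrix (Fin n) (Fin n) ℝ)), π 𝒜ᶜ = 0 →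
      Jcost Q Qf R s T π u x = ∫ A, g A ∂π := by
    intro π hπ
    apply integral_congr_ae
    rw [Filter.EventuallyEq, ae_iff]
    apply measure_mono_null _ hπ
    intro A hA
    simp only [mem_setOf_eq, mem_compl_iff] at hA ⊢
    intro hmem
    exact hA (hgA A hmem).symm
  have hJN : (fun N => Jcost Q Qf R s T (πN N) u x) = fun N => ∫ A, g A ∂(πN N) :=
    funext fun N => key (πN N) (hπNs N)
  rw [hJN, key πlim hπlims]
  exact hw g g.continuous ⟨‖g‖, fun A => by
    rw [← Real.norm_eq_abs]; exact g.norm_coe_le_norm A⟩
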